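/- arXiv:1501.06502 — 2 statements merged into one kernel-verified Lean document; each statement's English description precedes it below -/
import Mathlib

section
/- Let A be an m×m complex matrix, C₁ an n₁×m complex matrix, and K₂ an m×n₂ complex matrix. If C₁ Aᵏ K₂ = 0 for every k ∈ {0, 1, …, m−1}, then for every z ∈ ℂ such that I − zA is invertible, C₁ (I − zA)⁻¹ K₂ = 0. -/
open Polynomial Matrix

/-- Auxiliary: if `C₁ Aᵏ K₂ = 0` for all `k < m`, then `C₁ (aeval A p) K₂ = 0` for
every polynomial `p`, by reducing `p` modulo the characteristic polynomial of `A`. -/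
lemma aux_poly_zero (m n₁ n₂ : ℕ)
    (A : Matrix (Fin m) (Fin m) ℂ) (C₁ : Matrix (Fin n₁) (Fin m) ℂ)
    (K₂ : Matrix (Fin m) (Fin n₂) ℂ)
    (h : ∀ k < m, C₁ * A ^ k * K₂ = 0)
    (p : ℂ[X]) : C₁ * (aeval A p) * K₂ = 0 := by
  have hm : (Matrix.charpoly A).Monic := A.charpoly_monic
  have key : aeval A p = aeval A (p %ₘ A.charpoly) := by
    conv_lhs => rw [← Polynomial.modByMonic_add_div p A.charpoly]
    simp [Matrix.aeval_self_charpoly]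
  rw [key]
  set r := p %ₘ A.charpoly with hrdef
  by_cases hr : r = 0
  · simp [hr]
  · have hdeg : r.natDegree < m := by
      have h1 : r.degree < (A.charpoly).degree := Polynomial.degree_modByMonic_lt p hm
      have h2 : r.natDegree < (A.charpoly).natDegree :=
        Polynomial.natDegree_lt_natDegree hr h1
      simpa [Matrix.charpoly_natDegree_eq_dim] using h2
    rw [Polynomial.aeval_eq_sum_range, Matrix.mul_sum, Matrix.sum_mul]
    apply Finset.sum_eq_zero
    intro i hi
    have hi' : i < m :=
      lt_of_le_of_lt (Nat.lt_succ_iff.mp (Finset.mem_range.mp hi)) hdeg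
    rw [Matrix.mul_smul, Matrix.smul_mul, h i hi', smul_zero]

/-- If `C₁ Aᵏ K₂ = 0` for `k = 0, …, m-1`, then the (1,2) block of the resolvent part
of the transfer function vanishes: `C₁ (I - zA)⁻¹ K₂ = 0` whenever `I - zA` is invertible. -/
theorem noncausality_transfer_block_zero (m n₁ n₂ : ℕ)
    (A : Matrix (Fin m) (Fin m) ℂ) (C₁ : Matrix (Fin n₁) (Fin m) ℂ)
    (K₂ : Matrix (Fin m) (Fin n₂) ℂ)
    (h : ∀ k < m, C₁ * A ^ k * K₂ = 0)
    (z : ℂ) (hz : IsUnit (1 - z • A)) :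
    C₁ * (1 - z • A)⁻¹ * K₂ = 0 := by
  set B : Matrix (Fin m) (Fin m) ℂ := 1 - z • A with hB
  set p : ℂ[X] := B.charpoly with hp
  have hdet : IsUnit B.det := (Matrix.isUnit_iff_isUnit_det B).mp hz
  have hc0 : p.coeff 0 ≠ 0 := by
    intro h0
    have := B.det_eq_sign_charpoly_coeff
    rw [← hp, h0, mul_zero] at this
    exact hdet.ne_zero this
  have hCH : aeval B p = 0 := Matrix.aeval_self_charpoly B
  have hsplit : X * p.divX + C (p.coeff 0) = p := Polynomial.X_mul_divX_add p
  have hBmul : B * ((-(p.coeff 0)⁻¹) • aeval B p.divX) = 1 := by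
    have h1 : B * aeval B p.divX + (p.coeff 0) • 1 = 0 := by
      have h0 : aeval B (X * p.divX) + aeval B (C (p.coeff 0)) = 0 := by
        rw [← map_add, hsplit, hCH]
      rwa [_root_.map_mul, Polynomial.aeval_X, Polynomial.aeval_C,
        Algebra.algebraMap_eq_smul_one] at h0
    have h2 : B * aeval B p.divX = -((p.coeff 0) • 1) := by linear_combination (norm := abel) h1
    rw [Matrix.mul_smul, h2, smul_neg, neg_smul, neg_neg, smul_smul,
      inv_mul_cancel₀ hc0, one_smul]
  have hinv : B⁻¹ = (-(p.coeff 0)⁻¹) • aeval B p.divX := Matrix.inv_eq_right_inv hBmul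
  have hBeq : B = aeval A (1 - C z * X) := by
    simp [hB, Algebra.smul_def]
  have hcomp : aeval B p.divX = aeval A (p.divX.comp (1 - C z * X)) := by
    rw [Polynomial.aeval_comp, ← hBeq]
  rw [hinv, hcomp, Matrix.mul_smul, Matrix.smul_mul,
    aux_poly_zero m n₁ n₂ A C₁ K₂ h, smul_zero]
end

section
/- Let M be an invertible square matrix partitioned into 3×3 blocks M = [[M₁₁, M₁₂, M₁₃], [M₂₁, M₂₂, M₂₃], [M₃₁, M₃₂, M₃₃]] with square diagonal blocks, and suppose both M₃₃ and the submatrix P = [[M₁₁, M₁₃], [M₃₁, M₃₃]] are invertible. Writing M⁻¹ = [[B₁₁, B₁₂, B₁₃], [B₂₁, B₂₂, B₂₃], [B₃₁, B₃₂, B₃₃]] in the same block partition, we have B₁₂ = 0 if and only if M₁₂ − M₁₃ M₃₃⁻¹ M₃₂ = 0. -/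
/-- For an invertible 3×3 block matrix `M` with `M₃₃` and the corner submatrix
`P = [[M₁₁, M₁₃], [M₃₁, M₃₃]]` invertible, the (1,2) block of `M⁻¹` vanishes if and
only if `M₁₂ - M₁₃ M₃₃⁻¹ M₃₂ = 0`. -/
theorem inverse_block12_zero_iff_conditional (n₁ n₂ n₃ : ℕ)
    (M₁₁ : Matrix (Fin n₁) (Fin n₁) ℂ) (M₁₂ : Matrix (Fin n₁) (Fin n₂) ℂ)
    (M₁₃ : Matrix (Fin n₁) (Fin n₃) ℂ)
    (M₂₁ : Matrix (Fin n₂) (Fin n₁) ℂ) (M₂₂ : Matrix (Fin n₂) (Fin n₂) ℂ)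
    (M₂₃ : Matrix (Fin n₂) (Fin n₃) ℂ)
    (M₃₁ : Matrix (Fin n₃) (Fin n₁) ℂ) (M₃₂ : Matrix (Fin n₃) (Fin n₂) ℂ)
    (M₃₃ : Matrix (Fin n₃) (Fin n₃) ℂ)
    (M : Matrix (Fin n₁ ⊕ (Fin n₂ ⊕ Fin n₃)) (Fin n₁ ⊕ (Fin n₂ ⊕ Fin n₃)) ℂ)
    (hM : M = Matrix.fromBlocks M₁₁ (Matrix.fromCols M₁₂ M₁₃)
        (Matrix.fromRows M₂₁ M₃₁) (Matrix.fromBlocks M₂₂ M₂₃ M₃₂ M₃₃))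
    (hMu : IsUnit M) (h33 : IsUnit M₃₃)
    (hP : IsUnit (Matrix.fromBlocks M₁₁ M₁₃ M₃₁ M₃₃)) :
    (∀ (i : Fin n₁) (j : Fin n₂), M⁻¹ (Sum.inl i) (Sum.inr (Sum.inl j)) = 0) ↔
      M₁₂ - M₁₃ * M₃₃⁻¹ * M₃₂ = 0 := by
  obtain ⟨i33⟩ := h33.nonempty_invertible
  obtain ⟨iP⟩ := hP.nonempty_invertible
  -- the reindexing equivalence
  let f : (Fin n₁ ⊕ (Fin n₂ ⊕ Fin n₃)) ≃ ((Fin n₁ ⊕ Fin n₃) ⊕ Fin n₂) :=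
    ⟨Sum.elim (fun i => Sum.inl (Sum.inl i))
        (Sum.elim (fun j => Sum.inr j) (fun k => Sum.inl (Sum.inr k))),
     Sum.elim (Sum.elim Sum.inl (fun k => Sum.inr (Sum.inr k))) (fun j => Sum.inr (Sum.inl j)),
     by rintro (i | j | k) <;> rfl, by rintro ((i | k) | j) <;> rfl⟩
  have hMN : M = (Matrix.fromBlocks (Matrix.fromBlocks M₁₁ M₁₃ M₃₁ M₃₃)
      (Matrix.fromRows M₁₂ M₃₂) (Matrix.fromCols M₂₁ M₂₃) M₂₂).submatrix f f := by
    subst hM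
    ext i j
    rcases i with i | i | i <;> rcases j with j | j | j <;> rfl
  have hNu : IsUnit (Matrix.fromBlocks (Matrix.fromBlocks M₁₁ M₁₃ M₃₁ M₃₃)
      (Matrix.fromRows M₁₂ M₃₂) (Matrix.fromCols M₂₁ M₂₃) M₂₂) := by
    rw [hMN] at hMu
    exact (Matrix.isUnit_submatrix_equiv f f).mp hMu
  obtain ⟨iN⟩ := hNu.nonempty_invertible
  letI iS : Invertible (M₂₂ - Matrix.fromCols M₂₁ M₂₃ *
      ⅟(Matrix.fromBlocks M₁₁ M₁₃ M₃₁ M₃₃) * Matrix.fromRows M₁₂ M₃₂) :=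
    Matrix.invertibleOfFromBlocks₁₁Invertible _ _ _ _
  letI iW : Invertible (M₁₁ - M₁₃ * ⅟M₃₃ * M₃₁) :=
    Matrix.invertibleOfFromBlocks₂₂Invertible M₁₁ M₁₃ M₃₁ M₃₃
  have hNinv := Matrix.invOf_fromBlocks₁₁_eq (Matrix.fromBlocks M₁₁ M₁₃ M₃₁ M₃₃)
      (Matrix.fromRows M₁₂ M₃₂) (Matrix.fromCols M₂₁ M₂₃) M₂₂
  have hPinv := Matrix.invOf_fromBlocks₂₂_eq M₁₁ M₁₃ M₃₁ M₃₃
  -- the (1,2) block of the inverse of the corner matrix times the row block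
  have hPR : ⅟(Matrix.fromBlocks M₁₁ M₁₃ M₃₁ M₃₃) * Matrix.fromRows M₁₂ M₃₂ =
      Matrix.fromRows (⅟(M₁₁ - M₁₃ * ⅟M₃₃ * M₃₁) * (M₁₂ - M₁₃ * ⅟M₃₃ * M₃₂))
        (-(⅟M₃₃ * M₃₁ * ⅟(M₁₁ - M₁₃ * ⅟M₃₃ * M₃₁)) * M₁₂ +
          (⅟M₃₃ + ⅟M₃₃ * M₃₁ * ⅟(M₁₁ - M₁₃ * ⅟M₃₃ * M₃₁) * M₁₃ * ⅟M₃₃) * M₃₂) := by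
    rw [hPinv, Matrix.fromBlocks_mul_fromRows]
    rw [Matrix.mul_sub]
    simp only [Matrix.neg_mul, ← sub_eq_add_neg, Matrix.mul_assoc]
  -- expression for M⁻¹
  have hMinv : M⁻¹ = (⅟(Matrix.fromBlocks (Matrix.fromBlocks M₁₁ M₁₃ M₃₁ M₃₃)
      (Matrix.fromRows M₁₂ M₃₂) (Matrix.fromCols M₂₁ M₂₃) M₂₂)).submatrix f f := by
    rw [hMN, Matrix.inv_submatrix_equiv, Matrix.invOf_eq_nonsing_inv]
  have hentry : ∀ (i : Fin n₁) (j : Fin n₂),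
      M⁻¹ (Sum.inl i) (Sum.inr (Sum.inl j)) =
        -(⅟(Matrix.fromBlocks M₁₁ M₁₃ M₃₁ M₃₃) * Matrix.fromRows M₁₂ M₃₂ *
          ⅟(M₂₂ - Matrix.fromCols M₂₁ M₂₃ * ⅟(Matrix.fromBlocks M₁₁ M₁₃ M₃₁ M₃₃) *
            Matrix.fromRows M₁₂ M₃₂)) (Sum.inl i) j := by
    intro i j
    rw [hMinv, hNinv]
    rfl
  have h33' : M₃₃⁻¹ = ⅟M₃₃ := (Matrix.invOf_eq_nonsing_inv M₃₃).symm
  rw [h33']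
  constructor
  · intro h
    -- the top block of ⅟P * R * ⅟S is zero
    have htop : ⅟(M₁₁ - M₁₃ * ⅟M₃₃ * M₃₁) * (M₁₂ - M₁₃ * ⅟M₃₃ * M₃₂) *
        ⅟(M₂₂ - Matrix.fromCols M₂₁ M₂₃ * ⅟(Matrix.fromBlocks M₁₁ M₁₃ M₃₁ M₃₃) *
          Matrix.fromRows M₁₂ M₃₂) = 0 := by
      ext i j
      have := h i j
      rw [hentry i j] at this
      rw [hPR, Matrix.fromRows_mul] at this
      simpa [Matrix.fromRows_apply_inl] using this
    have h0 : (M₁₁ - M₁₃ * ⅟M₃₃ * M₃₁) * (⅟(M₁₁ - M₁₃ * ⅟M₃₃ * M₃₁) *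
        (M₁₂ - M₁₃ * ⅟M₃₃ * M₃₂) *
        ⅟(M₂₂ - Matrix.fromCols M₂₁ M₂₃ * ⅟(Matrix.fromBlocks M₁₁ M₁₃ M₃₁ M₃₃) *
          Matrix.fromRows M₁₂ M₃₂) *
        (M₂₂ - Matrix.fromCols M₂₁ M₂₃ * ⅟(Matrix.fromBlocks M₁₁ M₁₃ M₃₁ M₃₃) *
          Matrix.fromRows M₁₂ M₃₂)) = 0 := by
      rw [htop, Matrix.zero_mul, Matrix.mul_zero]
    have h1 : (M₁₁ - M₁₃ * ⅟M₃₃ * M₃₁) * (⅟(M₁₁ - M₁₃ * ⅟M₃₃ * M₃₁) *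
        (M₁₂ - M₁₃ * ⅟M₃₃ * M₃₂) *
        ⅟(M₂₂ - Matrix.fromCols M₂₁ M₂₃ * ⅟(Matrix.fromBlocks M₁₁ M₁₃ M₃₁ M₃₃) *
          Matrix.fromRows M₁₂ M₃₂) *
        (M₂₂ - Matrix.fromCols M₂₁ M₂₃ * ⅟(Matrix.fromBlocks M₁₁ M₁₃ M₃₁ M₃₃) *
          Matrix.fromRows M₁₂ M₃₂)) = M₁₂ - M₁₃ * ⅟M₃₃ * M₃₂ := by
      rw [Matrix.mul_assoc (⅟(M₁₁ - M₁₃ * ⅟M₃₃ * M₃₁) * (M₁₂ - M₁₃ * ⅟M₃₃ * M₃₂)),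
        invOf_mul_self, Matrix.mul_one, ← Matrix.mul_assoc, mul_invOf_self, Matrix.one_mul]
    exact h1.symm.trans h0
  · intro h
    intro i j
    rw [hentry i j, hPR, Matrix.fromRows_mul, h, Matrix.mul_zero, Matrix.zero_mul]
    simp [Matrix.fromRows_apply_inl]
end
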